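/- Let (C, W) be a split-generated category with weak equivalences, with localization γ : C → Ho(C). Then the induced functor C/∼_W → Ho(C) from the quotient of C by the homotopy congruence ∼_W (where f ∼_W g iff γf = γg) is an isomorphism of categories; equivalently, every zigzag of arrows in C (backward arrows being weak equivalences) is equal in Ho(C) to (the image of) a single forward arrow. -/

import Mathlib

open CategoryTheory

variable {C : Type*} [Category C]

/-- Arrows that are finite composites of split weak equivalences. -/
inductive SplitGenChain (W : MorphismProperty C) : ∀ {X Y : C}, (X ⟶ Y) → Prop
  | of {X Y : C} (f : X ⟶ Y) (hW : W f) (hs : IsSplitMono f ∨ IsSplitEpi f) :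
      SplitGenChain W f
  | comp {X Y Z : C} {f : X ⟶ Y} {g : Y ⟶ Z} :
      SplitGenChain W f → SplitGenChain W g → SplitGenChain W (f ≫ g)

def SplitGenerated (W : MorphismProperty C) : Prop :=
  ∀ ⦃X Y : C⦄ (f : X ⟶ Y), W f → SplitGenChain W f

/-- The homotopy congruence `∼_W`: `f ∼_W g` iff `γf = γg` in `Ho(C)`. -/
def rhoRel (W : MorphismProperty C) : HomRel C :=
  fun {_ _} f g => W.Q.map f = W.Q.map g

lemma splitGenChain_quot_isIso (W : MorphismProperty C) {X Y : C} {f : X ⟶ Y}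
    (h : SplitGenChain W f) :
    IsIso ((CategoryTheory.Quotient.functor (rhoRel W)).map f) := by
  induction h with
  | of f hW hs =>
    have hiso : IsIso (W.Q.map f) := Localization.inverts W.Q W f hW
    rcases hs with h | h
    · refine ⟨(CategoryTheory.Quotient.functor (rhoRel W)).map (retraction f), ?_, ?_⟩
      · rw [← Functor.map_comp, IsSplitMono.id, CategoryTheory.Functor.map_id]
      · rw [← Functor.map_comp]
        have hrel : rhoRel W (retraction f ≫ f) (𝟙 _) := by
          have h1 : W.Q.map f ≫ W.Q.map (retraction f) = 𝟙 _ := by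
            rw [← Functor.map_comp, IsSplitMono.id, CategoryTheory.Functor.map_id]
          show W.Q.map (retraction f ≫ f) = W.Q.map (𝟙 _)
          rw [Functor.map_comp, CategoryTheory.Functor.map_id, ← IsIso.inv_eq_of_hom_inv_id h1,
            IsIso.inv_hom_id]
        rw [CategoryTheory.Quotient.sound _ hrel, CategoryTheory.Functor.map_id]
    · refine ⟨(CategoryTheory.Quotient.functor (rhoRel W)).map (section_ f), ?_, ?_⟩
      · rw [← Functor.map_comp]
        have hrel : rhoRel W (f ≫ section_ f) (𝟙 _) := by
          have h1 : W.Q.map (section_ f) ≫ W.Q.map f = 𝟙 _ := by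
            rw [← Functor.map_comp, IsSplitEpi.id, CategoryTheory.Functor.map_id]
          show W.Q.map (f ≫ section_ f) = W.Q.map (𝟙 _)
          rw [Functor.map_comp, CategoryTheory.Functor.map_id, ← IsIso.inv_eq_of_inv_hom_id h1,
            IsIso.hom_inv_id]
        rw [CategoryTheory.Quotient.sound _ hrel, CategoryTheory.Functor.map_id]
      · rw [← Functor.map_comp, IsSplitEpi.id, CategoryTheory.Functor.map_id]
  | comp _ _ ihf ihg =>
    rw [Functor.map_comp]
    exact IsIso.comp_isIso

/-- Whitehead condition (2) for a split-generated category with weak equivalences: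
the induced functor `C/∼_W ⟶ Ho(C)` is an isomorphism of categories. -/
theorem stmt7 (W : MorphismProperty C) [W.ContainsIdentities]
    [W.HasTwoOutOfThreeProperty] (hsg : SplitGenerated W) :
    ∃ ψ : W.Localization ⥤ CategoryTheory.Quotient (rhoRel W),
      (CategoryTheory.Quotient.lift (rhoRel W) W.Q (fun _ _ _ _ h => h)) ⋙ ψ =
        𝟭 (CategoryTheory.Quotient (rhoRel W)) ∧
      ψ ⋙ (CategoryTheory.Quotient.lift (rhoRel W) W.Q (fun _ _ _ _ h => h)) =
        𝟭 W.Localization := by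
  have hF : W.IsInvertedBy (CategoryTheory.Quotient.functor (rhoRel W)) :=
    fun X Y f hf => splitGenChain_quot_isIso W (hsg f hf)
  refine ⟨Localization.Construction.lift _ hF, ?_, ?_⟩
  · apply CategoryTheory.Quotient.lift_unique'
    rw [← Functor.assoc, CategoryTheory.Quotient.lift_spec (rhoRel W) W.Q (fun _ _ _ _ h => h),
      Localization.Construction.fac, Functor.comp_id]
  · apply Localization.Construction.uniq
    rw [← Functor.assoc, Localization.Construction.fac,
      CategoryTheory.Quotient.lift_spec (rhoRel W) W.Q (fun _ _ _ _ h => h), Functor.comp_id]
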